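/- For prime p ≡ 1 (mod 4) with p > 5, the sum ∑_{μ=1}^{p-1} μ² (μ|p) is divisible by p, where (μ|p) is the Legendre symbol. Consequently B₂(χ) := (1/p) ∑_{μ=1}^{p-1} μ² (μ|p) is an integer. -/

import Mathlib

theorem legendre_weighted_square_sum_div (p : ℕ) [Fact p.Prime]
    (h4 : p % 4 = 1) (h5 : 5 < p) :
    (p : ℤ) ∣ ∑ μ ∈ Finset.Icc 1 (p - 1), (μ : ℤ) ^ 2 * legendreSym p μ := by
  have hp : p.Prime := Fact.out
  rw [← ZMod.intCast_zmod_eq_zero_iff_dvd]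
  push_cast
  have key : ∀ μ ∈ Finset.Icc 1 (p - 1),
      ((μ : ZMod p) ^ 2 * ((legendreSym p (μ : ℤ) : ℤ) : ZMod p)) = (μ : ZMod p) ^ (2 + p / 2) := by
    intro μ _
    rw [legendreSym.eq_pow, pow_add]
    push_cast
    ring
  rw [Finset.sum_congr rfl key]
  have hIcc : ∑ μ ∈ Finset.Icc 1 (p - 1), (μ : ZMod p) ^ (2 + p / 2)
      = ∑ x : ZMod p, x ^ (2 + p / 2) := by
    have herase : Finset.Icc 1 (p - 1) = (Finset.range p).erase 0 := by
      ext μ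
      simp only [Finset.mem_Icc, Finset.mem_erase, Finset.mem_range]
      omega
    rw [herase, Finset.sum_erase _ (by simp [pow_succ, pow_add])]
    refine Finset.sum_nbij' (fun μ => (μ : ZMod p)) (fun x => x.val) ?_ ?_ ?_ ?_ ?_
    · intro a _; exact Finset.mem_univ _
    · intro x _; exact Finset.mem_range.mpr (ZMod.val_lt x)
    · intro a ha; exact ZMod.val_cast_of_lt (Finset.mem_range.mp ha)
    · intro x _; simp [ZMod.natCast_val, ZMod.cast_id]
    · intro a _; rfl
  rw [hIcc]
  apply FiniteField.sum_pow_lt_card_sub_one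
  rw [ZMod.card]
  omega
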